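/- Completeness of cobisimilarity for image-finite LTSs: if the state space and all successor sets are finite, then any two non-bisimilar states are related by the least relation closed under the apartness rules for LTSs. -/

import Mathlib

/-- A bisimulation on an LTS `γ : X → A → Set X`. -/
def IsBisimulation {X A : Type*} (γ : X → A → Set X) (R : X → X → Prop) : Prop :=
  ∀ x y, R x y →
    (∀ a, ∀ x' ∈ γ x a, ∃ y' ∈ γ y a, R x' y') ∧
    (∀ a, ∀ y' ∈ γ y a, ∃ x' ∈ γ x a, R x' y')

/-- Bisimilarity: the union of all bisimulations. -/
def Bisimilar {X A : Type*} (γ : X → A → Set X) (x y : X) : Prop :=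
  ∃ R : X → X → Prop, IsBisimulation γ R ∧ R x y

/-- Apartness for an LTS, defined inductively by the two proof rules. -/
inductive LtsApart {X A : Type*} (γ : X → A → Set X) : X → X → Prop
  | left (x y : X) (a : A) (x' : X) (hx : x' ∈ γ x a)
      (h : ∀ y' ∈ γ y a, LtsApart γ x' y') : LtsApart γ x y
  | right (x y : X) (a : A) (y' : X) (hy : y' ∈ γ y a)
      (h : ∀ x' ∈ γ x a, LtsApart γ x' y') : LtsApart γ x y

/-- Completeness for finite LTSs: non-bisimilar states are apart. -/
theorem ltsApart_complete {X A : Type*} [Finite X] [Finite A]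
    (γ : X → A → Set X) (x y : X) (h : ¬ Bisimilar γ x y) : LtsApart γ x y := by
  by_contra hna
  apply h
  refine ⟨fun u v => ¬ LtsApart γ u v, ?_, hna⟩
  intro u v huv
  constructor
  · intro a x' hx'
    by_contra hc
    push_neg at hc
    exact huv (LtsApart.left u v a x' hx' fun y' hy' => hc y' hy')
  · intro a y' hy'
    by_contra hc
    push_neg at hc
    exact huv (LtsApart.right u v a y' hy' fun x' hx' => hc x' hx')
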